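/- For every δ with 0 < δ < 1/2, in the 3×3 zero-sum matrix game with row payoff matrix U = [[1,δ,1/2],[δ,1,1/2],[0,0,1/2]], no pure portfolio of size 1 (i.e., no single column) has pessimistic exploitability 0, even though the column player's unique Nash equilibrium (0,0,1) has support of size 1. -/

import Mathlib

open Finset Matrix

noncomputable section

/-- Mixed strategies over a finite action set. -/
def simplex (α : Type*) [Fintype α] : Set (α → ℝ) :=
  {x | (∀ i, 0 ≤ x i) ∧ ∑ i, x i = 1}

/-- Expected payoff to the row (maximizing) player. -/
def pay {α β : Type*} [Fintype α] [Fintype β]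
    (U : Matrix α β ℝ) (x : α → ℝ) (y : β → ℝ) : ℝ :=
  ∑ i, ∑ j, x i * U i j * y j

/-- Nash equilibrium of the zero-sum game with row payoff matrix `U`. -/
def isNash {α β : Type*} [Fintype α] [Fintype β]
    (U : Matrix α β ℝ) (x : α → ℝ) (y : β → ℝ) : Prop :=
  x ∈ simplex α ∧ y ∈ simplex β ∧
  (∀ x' ∈ simplex α, pay U x' y ≤ pay U x y) ∧
  (∀ y' ∈ simplex β, pay U x y ≤ pay U x y')

/-- Worst-case (over pure columns) payoff of row strategy `x`. -/
def wc {α β : Type*} [Fintype α] [Fintype β]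
    (U : Matrix α β ℝ) (x : α → ℝ) : ℝ :=
  sInf (Set.range fun j : β => ∑ i, x i * U i j)

end

set_option maxHeartbeats 1000000 in
theorem stmt3 (δ : ℝ) (h0 : 0 < δ) (h1 : δ < 1/2) :
    let U : Matrix (Fin 3) (Fin 3) ℝ := !![1,δ,1/2; δ,1,1/2; 0,0,1/2]
    (∀ x y, isNash U x y → y = ![0,0,1]) ∧
    (∀ j : Fin 3,
      ∃ x y, isNash (Matrix.of fun i (_ : Fin 1) => U i j) x y ∧ 0 < 1/2 - wc U x) := by
  intro U
  have hU : ∀ i j, U i j = !![1,δ,1/2; δ,1,1/2; 0,0,1/2] i j := fun i j => rfl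
  constructor
  · rintro x y ⟨⟨hx0, hx1⟩, ⟨hy0, hy1⟩, hrow, hcol⟩
    have he3 : (![0,0,1] : Fin 3 → ℝ) ∈ simplex (Fin 3) := by
      refine ⟨fun i => ?_, by simp [Fin.sum_univ_three]⟩
      fin_cases i <;> norm_num
    have hxs : (![1/2,1/2,0] : Fin 3 → ℝ) ∈ simplex (Fin 3) := by
      refine ⟨fun i => ?_, by norm_num [Fin.sum_univ_three]; rfl⟩
      fin_cases i <;> norm_num
    have h1 := hcol _ he3
    have h2 := hrow _ hxs
    have e00 : U 0 0 = 1 := rfl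
    have e01 : U 0 1 = δ := rfl
    have e02 : U 0 2 = 1/2 := rfl
    have e10 : U 1 0 = δ := rfl
    have e11 : U 1 1 = 1 := rfl
    have e12 : U 1 2 = 1/2 := rfl
    have e20 : U 2 0 = 0 := rfl
    have e21 : U 2 1 = 0 := rfl
    have e22 : U 2 2 = 1/2 := rfl
    simp only [pay, Fin.sum_univ_three, e00, e01, e02, e10, e11, e12, e20, e21, e22] at h1 h2
    norm_num [Matrix.cons_val_zero, Matrix.cons_val_one, Matrix.head_cons,
      Matrix.cons_val_two, Matrix.tail_cons] at h1 h2
    rw [Fin.sum_univ_three] at hy1 hx1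
    have hy00 := hy0 0; have hy01 := hy0 1; have hy02 := hy0 2
    have hx00 := hx0 0; have hx01 := hx0 1; have hx02 := hx0 2
    have hz0 : y 0 = 0 := by nlinarith [mul_nonneg h0.le hy00, mul_nonneg h0.le hy01]
    have hz1 : y 1 = 0 := by nlinarith [mul_nonneg h0.le hy00, mul_nonneg h0.le hy01]
    have hz2 : y 2 = 1 := by linarith
    funext i
    fin_cases i
    · simpa using hz0
    · simpa using hz1
    · simpa using hz2
  · intro j
    have hbdd : BddBelow (Set.range fun j : Fin 3 => ∑ i, (![(1:ℝ),0,0]) i * U i j) :=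
      (Set.finite_range _).bddBelow
    have hbdd' : BddBelow (Set.range fun j : Fin 3 => ∑ i, (![(0:ℝ),1,0]) i * U i j) :=
      (Set.finite_range _).bddBelow
    have hwc1 : wc U ![1,0,0] ≤ δ := by
      refine csInf_le hbdd ⟨1, ?_⟩
      simp [Fin.sum_univ_three, hU]
    have hwc2 : wc U ![0,1,0] ≤ δ := by
      refine csInf_le hbdd' ⟨0, ?_⟩
      simp [Fin.sum_univ_three, hU]
    have hy : (fun _ : Fin 1 => (1:ℝ)) ∈ simplex (Fin 1) := by
      exact ⟨fun i => by norm_num, by simp⟩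
    fin_cases j
    · refine ⟨![1,0,0], fun _ => 1, ⟨⟨fun i => by fin_cases i <;> norm_num,
        by norm_num [Fin.sum_univ_three]; rfl⟩, hy, ?_, ?_⟩, by linarith⟩
      · rintro x' ⟨h0', h1'⟩
        rw [Fin.sum_univ_three] at h1'
        simp only [pay, Fin.sum_univ_three, Fin.sum_univ_one, Matrix.of_apply, hU, Matrix.cons_val_two, Matrix.tail_cons, Matrix.head_cons]
        norm_num
        nlinarith [h0' 0, h0' 1, h0' 2, mul_nonneg (by linarith : (0:ℝ) ≤ 1 - δ) (h0' 1)]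
      · rintro y' ⟨h0', h1'⟩
        rw [Fin.sum_univ_one] at h1'
        simp only [pay, Fin.sum_univ_three, Fin.sum_univ_one, Matrix.of_apply, hU, h1', Matrix.cons_val_two, Matrix.tail_cons, Matrix.head_cons]
        norm_num
    · refine ⟨![0,1,0], fun _ => 1, ⟨⟨fun i => by fin_cases i <;> norm_num,
        by norm_num [Fin.sum_univ_three]; rfl⟩, hy, ?_, ?_⟩, by linarith⟩
      · rintro x' ⟨h0', h1'⟩
        rw [Fin.sum_univ_three] at h1'
        simp only [pay, Fin.sum_univ_three, Fin.sum_univ_one, Matrix.of_apply, hU, Matrix.cons_val_two, Matrix.tail_cons, Matrix.head_cons]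
        norm_num
        nlinarith [h0' 0, h0' 1, h0' 2, mul_nonneg (by linarith : (0:ℝ) ≤ 1 - δ) (h0' 0)]
      · rintro y' ⟨h0', h1'⟩
        rw [Fin.sum_univ_one] at h1'
        simp only [pay, Fin.sum_univ_three, Fin.sum_univ_one, Matrix.of_apply, hU, h1', Matrix.cons_val_two, Matrix.tail_cons, Matrix.head_cons]
        norm_num
    · refine ⟨![1,0,0], fun _ => 1, ⟨⟨fun i => by fin_cases i <;> norm_num,
        by norm_num [Fin.sum_univ_three]; rfl⟩, hy, ?_, ?_⟩, by linarith⟩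
      · rintro x' ⟨h0', h1'⟩
        rw [Fin.sum_univ_three] at h1'
        simp only [pay, Fin.sum_univ_three, Fin.sum_univ_one, Matrix.of_apply, hU, Matrix.cons_val_two, Matrix.tail_cons, Matrix.head_cons]
        norm_num
        linarith
      · rintro y' ⟨h0', h1'⟩
        rw [Fin.sum_univ_one] at h1'
        simp only [pay, Fin.sum_univ_three, Fin.sum_univ_one, Matrix.of_apply, hU, h1', Matrix.cons_val_two, Matrix.tail_cons, Matrix.head_cons]
        norm_num
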